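/- Assume cov(N) = cof(N), where N is the ideal of Lebesgue null sets. Then there exists X ⊆ ℝ with positive Lebesgue outer measure such that C ∩ (X + t) is countable for every t ∈ ℝ, where C is a fixed Cantor set. -/

import Mathlib

open MeasureTheory Set Filter Classical
open scoped ENNReal NNReal

noncomputable section
namespace Stmt8Aux

/-- Left endpoints of the `2^n` intervals of length `3^{-n}` covering `preCantorSet n`. -/
def cpt : (n : ℕ) → (Fin n → Bool) → ℝ
  | 0, _ => 0
  | n + 1, a => ((if a 0 then 2 else 0) + cpt n (fun i => a i.succ)) / 3

lemma preCantorSet_subset_cover (n : ℕ) :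
    preCantorSet n ⊆ ⋃ a : Fin n → Bool, Icc (cpt n a) (cpt n a + (1/3 : ℝ) ^ n) := by
  induction n with
  | zero =>
    intro x hx
    exact mem_iUnion.2 ⟨fun i => false, by simpa [cpt] using hx⟩
  | succ n ih =>
    rintro x (⟨y, hy, rfl⟩ | ⟨y, hy, rfl⟩) <;>
      obtain ⟨a, ha⟩ := mem_iUnion.1 (ih hy)
    · refine mem_iUnion.2 ⟨Fin.cons false a, ?_⟩
      have hc : cpt (n+1) (Fin.cons false a) = cpt n a / 3 := by
        simp [cpt, Fin.cons_succ]
      rw [hc]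
      obtain ⟨h1, h2⟩ := ha
      constructor
      · linarith
      · have : (1/3 : ℝ) ^ (n+1) = (1/3 : ℝ) ^ n / 3 := by ring
        rw [this]; linarith
    · refine mem_iUnion.2 ⟨Fin.cons true a, ?_⟩
      have hc : cpt (n+1) (Fin.cons true a) = (2 + cpt n a) / 3 := by
        simp [cpt, Fin.cons_succ]
      rw [hc]
      obtain ⟨h1, h2⟩ := ha
      constructor
      · simp only [mem_image] at *
        linarith
      · have : (1/3 : ℝ) ^ (n+1) = (1/3 : ℝ) ^ n / 3 := by ring
        rw [this]; linarith

lemma cantorSet_subset_cover (n : ℕ) :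
    cantorSet ⊆ ⋃ a : Fin n → Bool, Icc (cpt n a) (cpt n a + (1/3 : ℝ) ^ n) :=
  fun x hx => preCantorSet_subset_cover n (Set.mem_iInter.1 hx n)

def pint (n : ℕ) (p : (Fin n → Bool) × (Fin n → Bool)) : Set ℝ :=
  Icc (cpt n p.1 - cpt n p.2 - 2 * (1/3 : ℝ) ^ n) (cpt n p.1 - cpt n p.2 + 2 * (1/3 : ℝ) ^ n)

/-- The number of interacting pairs for translation s, as `ℝ≥0∞`. -/
def fcount (n : ℕ) (s : ℝ) : ℝ≥0∞ :=
  ∑ p : (Fin n → Bool) × (Fin n → Bool), (pint n p).indicator (fun _ => (1 : ℝ≥0∞)) s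

def thr (n : ℕ) : ℝ≥0∞ := ENNReal.ofReal ((4/3 : ℝ) ^ n * n ^ 2)

def Bn (n : ℕ) : Set ℝ := {s | thr n ≤ fcount n s}

def Bad : Set ℝ := ⋃ N : ℕ, ⋂ n : ℕ, ⋂ (_ : N ≤ n), ⋂ (_ : 1 ≤ n), Bn n

lemma measurable_fcount (n : ℕ) : Measurable (fcount n) := by
  apply Finset.measurable_sum
  intro p _
  exact (measurable_const.indicator measurableSet_Icc)

lemma lintegral_fcount (n : ℕ) :
    ∫⁻ s, fcount n s ≤ ENNReal.ofReal (4 * (4/3 : ℝ) ^ n) := by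
  simp only [fcount]
  have hsum := lintegral_finset_sum (μ := (volume : Measure ℝ)) Finset.univ
    (f := fun (p : (Fin n → Bool) × (Fin n → Bool)) (s : ℝ) =>
      (pint n p).indicator (fun _ => (1 : ℝ≥0∞)) s)
    (fun p _ => measurable_const.indicator measurableSet_Icc)
  rw [hsum]
  have hone : ∀ p : (Fin n → Bool) × (Fin n → Bool),
      ∫⁻ s, (pint n p).indicator (fun _ => (1 : ℝ≥0∞)) s = ENNReal.ofReal (4 * (1/3 : ℝ) ^ n) := by
    intro p
    simp only [pint]
    rw [lintegral_indicator_const measurableSet_Icc, one_mul, Real.volume_Icc]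
    congr 1
    ring
  calc ∑ p : (Fin n → Bool) × (Fin n → Bool),
        ∫⁻ s, (pint n p).indicator (fun _ => (1 : ℝ≥0∞)) s
      = ∑ _p : (Fin n → Bool) × (Fin n → Bool), ENNReal.ofReal (4 * (1/3 : ℝ) ^ n) := by
        exact Finset.sum_congr rfl (fun p _ => hone p)
    _ = (Fintype.card ((Fin n → Bool) × (Fin n → Bool))) *
          ENNReal.ofReal (4 * (1/3 : ℝ) ^ n) := by
        rw [Finset.sum_const, nsmul_eq_mul]; norm_num
    _ ≤ ENNReal.ofReal (4 * (4/3 : ℝ) ^ n) := by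
        have hcard : (Fintype.card ((Fin n → Bool) × (Fin n → Bool)) : ℝ≥0∞)
            = ENNReal.ofReal ((4:ℝ) ^ n) := by
          rw [Fintype.card_prod, Fintype.card_fun, Fintype.card_bool, Fintype.card_fin]
          rw [ENNReal.ofReal_pow (by norm_num)]
          push_cast
          rw [show ENNReal.ofReal 4 = 4 from ENNReal.ofReal_ofNat 4, ← mul_pow]
          norm_num
        rw [hcard, ← ENNReal.ofReal_mul (by positivity)]
        apply ENNReal.ofReal_le_ofReal
        rw [show (4:ℝ)^n * (4 * (1/3:ℝ)^n) = 4 * ((4:ℝ)^n * (1/3:ℝ)^n) by ring,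
            ← mul_pow]
        norm_num

lemma volume_Bn (n : ℕ) (hn : 1 ≤ n) :
    volume (Bn n) ≤ ENNReal.ofReal (4 / (n : ℝ) ^ 2) := by
  have hmarkov := mul_meas_ge_le_lintegral₀ (μ := volume) (measurable_fcount n).aemeasurable (thr n)
  have hthr_pos : (0:ℝ) < (4/3 : ℝ) ^ n * n ^ 2 := by
    have : (0:ℝ) < (n:ℝ) := by exact_mod_cast hn
    positivity
  have hthr0 : thr n ≠ 0 := by
    simp only [thr, ne_eq, ENNReal.ofReal_eq_zero, not_le]
    exact hthr_pos
  have hthrT : thr n ≠ ⊤ := ENNReal.ofReal_ne_top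
  have h1 : volume (Bn n) ≤ (∫⁻ s, fcount n s) / thr n := by
    rw [ENNReal.le_div_iff_mul_le (Or.inl hthr0) (Or.inl hthrT), mul_comm]
    exact hmarkov
  refine h1.trans ?_
  have h2 : (∫⁻ s, fcount n s) ≤ ENNReal.ofReal (4 / (n:ℝ)^2) * thr n := by
    refine (lintegral_fcount n).trans ?_
    rw [thr, ← ENNReal.ofReal_mul (by positivity)]
    apply ENNReal.ofReal_le_ofReal
    have hn2 : ((n:ℝ))^2 ≠ 0 := by
      have : (0:ℝ) < (n:ℝ) := by exact_mod_cast hn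
      positivity
    have heq : 4 / (n:ℝ)^2 * ((4/3)^n * (n:ℝ)^2) = 4 * (4/3:ℝ)^n := by
      field_simp
    rw [heq]
  refine le_trans (ENNReal.div_le_div_right h2 (thr n)) ?_
  rw [mul_div_assoc, ENNReal.div_self hthr0 hthrT, mul_one]

lemma volume_Bad : volume Bad = 0 := by
  refine measure_iUnion_null fun N => ?_
  have hle : ∀ m : ℕ, volume (⋂ n : ℕ, ⋂ (_ : N ≤ n), ⋂ (_ : 1 ≤ n), Bn n)
      ≤ ENNReal.ofReal (4 / ((N + m + 1 : ℕ) : ℝ)) := by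
    intro m
    refine le_trans (measure_mono ?_) (le_trans (volume_Bn (N + m + 1) (by omega)) ?_)
    · intro s hs
      simp only [mem_iInter] at hs
      exact hs (N + m + 1) (by omega) (by omega)
    · apply ENNReal.ofReal_le_ofReal
      have h1 : (1:ℝ) ≤ ((N + m + 1 : ℕ) : ℝ) := by exact_mod_cast Nat.one_le_iff_ne_zero.2 (by omega)
      have h2 : ((N + m + 1 : ℕ) : ℝ) ≤ ((N + m + 1 : ℕ) : ℝ) ^ 2 := by nlinarith
      apply div_le_div_of_nonneg_left (by norm_num) (by linarith) h2
  have htend : Tendsto (fun m : ℕ => ENNReal.ofReal (4 / ((N + m + 1 : ℕ) : ℝ)))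
      atTop (nhds 0) := by
    have hbase : Tendsto (fun n : ℕ => ENNReal.ofReal (4 / (n : ℝ))) atTop (nhds 0) := by
      rw [show (0:ℝ≥0∞) = ENNReal.ofReal 0 by simp]
      exact ENNReal.tendsto_ofReal (tendsto_const_div_atTop_nhds_zero_nat 4)
    have hshift : Tendsto (fun m : ℕ => N + m + 1) atTop atTop :=
      tendsto_atTop_mono (fun m => by simp only [id_eq]; omega) tendsto_id
    exact hbase.comp hshift
  exact le_antisymm (ge_of_tendsto htend (Eventually.of_forall hle)) zero_le

/-- The difference set `C - (C ∩ (C + s))`, which is null for `s ∉ Bad`. -/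
def Eset (s : ℝ) : Set ℝ :=
  {z | ∃ c ∈ cantorSet, ∃ w ∈ cantorSet, w + s ∈ cantorSet ∧ z = c - w}

lemma volume_Eset {s : ℝ} (hs : s ∉ Bad) : volume (Eset s) = 0 := by
  classical
  have key : ∀ n : ℕ, 1 ≤ n → s ∉ Bn n →
      volume (Eset s) ≤ ENNReal.ofReal (2 * (8/9 : ℝ) ^ n * n ^ 2) := by
    intro n hn hsn
    set G : Finset ((Fin n → Bool) × (Fin n → Bool)) :=
      Finset.univ.filter (fun p => s ∈ pint n p) with hG
    have hfc : fcount n s = (G.card : ℝ≥0∞) := by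
      simp only [fcount, Set.indicator_apply, hG]
      rw [Finset.sum_boole]
    have hGlt : (G.card : ℝ≥0∞) ≤ thr n := by
      rw [← hfc]
      exact le_of_lt (lt_of_not_ge hsn)
    have hh : (0:ℝ) ≤ (1/3 : ℝ) ^ n := by positivity
    have hcover : Eset s ⊆ ⋃ a : Fin n → Bool, ⋃ p ∈ G,
        Icc (cpt n a - cpt n p.2 - (1/3:ℝ)^n) (cpt n a - cpt n p.2 + (1/3:ℝ)^n) := by
      rintro z ⟨c, hc, w, hw, hws, rfl⟩
      obtain ⟨a, ha⟩ := mem_iUnion.1 (cantorSet_subset_cover n hc)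
      obtain ⟨b, hb⟩ := mem_iUnion.1 (cantorSet_subset_cover n hw)
      obtain ⟨b', hb'⟩ := mem_iUnion.1 (cantorSet_subset_cover n hws)
      refine mem_iUnion.2 ⟨a, ?_⟩
      refine mem_iUnion.2 ⟨(b', b), ?_⟩
      refine mem_iUnion.2 ⟨?_, ?_⟩
      · rw [hG, Finset.mem_filter]
        refine ⟨Finset.mem_univ _, ?_⟩
        simp only [pint, mem_Icc]
        obtain ⟨h1, h2⟩ := hb
        obtain ⟨h3, h4⟩ := hb'
        constructor <;> linarith
      · obtain ⟨h1, h2⟩ := ha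
        obtain ⟨h3, h4⟩ := hb
        exact ⟨by linarith, by linarith⟩
    have hbound : volume (Eset s) ≤ _ := measure_mono hcover
    have hstep : volume (⋃ a : Fin n → Bool, ⋃ p ∈ G,
        Icc (cpt n a - cpt n p.2 - (1/3:ℝ)^n) (cpt n a - cpt n p.2 + (1/3:ℝ)^n))
        ≤ (Fintype.card (Fin n → Bool) : ℝ≥0∞) * ((G.card : ℝ≥0∞) *
            ENNReal.ofReal (2 * (1/3:ℝ)^n)) := by
      refine le_trans (measure_iUnion_fintype_le (volume : Measure ℝ) _) ?_
      rw [← Finset.card_univ, ← nsmul_eq_mul, ← Finset.sum_const]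
      refine Finset.sum_le_sum fun a _ => ?_
      refine le_trans (measure_biUnion_finset_le _ _) ?_
      rw [← nsmul_eq_mul, ← Finset.sum_const]
      refine Finset.sum_le_sum fun p _ => ?_
      rw [Real.volume_Icc]
      apply ENNReal.ofReal_le_ofReal
      ring_nf
      exact le_refl _
    refine le_trans hbound (le_trans hstep ?_)
    have hcard2 : (Fintype.card (Fin n → Bool) : ℝ≥0∞) = ENNReal.ofReal ((2:ℝ)^n) := by
      rw [Fintype.card_fun, Fintype.card_bool, Fintype.card_fin,
        ENNReal.ofReal_pow (by norm_num)]
      push_cast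
      rw [show ENNReal.ofReal 2 = 2 from ENNReal.ofReal_ofNat 2]
    rw [hcard2]
    refine le_trans (mul_le_mul_right (mul_le_mul_left hGlt _) _) ?_
    rw [thr, ← ENNReal.ofReal_mul (by positivity), ← ENNReal.ofReal_mul (by positivity)]
    apply ENNReal.ofReal_le_ofReal
    have : (2:ℝ)^n * ((4/3:ℝ)^n * (n:ℝ)^2 * (2 * (1/3:ℝ)^n))
        = 2 * ((2:ℝ) * (4/3) * (1/3))^n * (n:ℝ)^2 := by
      rw [mul_pow, mul_pow]
      ring
    rw [this]
    norm_num
  -- now use `s ∉ Bad` to find infinitely many good n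
  have hfreq : ∀ N : ℕ, ∃ n, N ≤ n ∧ 1 ≤ n ∧ s ∉ Bn n := by
    intro N
    by_contra hcon
    push_neg at hcon
    apply hs
    refine mem_iUnion.2 ⟨N, ?_⟩
    simp only [mem_iInter]
    intro n h1 h2
    by_contra hnotin
    exact hnotin (hcon n h1 h2)
  have htend : Tendsto (fun n : ℕ => ENNReal.ofReal (2 * (8/9 : ℝ) ^ n * n ^ 2))
      atTop (nhds 0) := by
    rw [show (0:ℝ≥0∞) = ENNReal.ofReal 0 by simp]
    apply ENNReal.tendsto_ofReal
    have hsum := summable_pow_mul_geometric_of_norm_lt_one (R := ℝ) 2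
      (r := 8/9) (by rw [Real.norm_eq_abs]; rw [abs_of_pos] <;> norm_num)
    have h0 := hsum.tendsto_atTop_zero
    have heq : (fun n : ℕ => 2 * (8/9 : ℝ) ^ n * n ^ 2)
        = (fun n : ℕ => 2 * ((n:ℝ) ^ 2 * (8/9 : ℝ) ^ n)) := by
      funext n; ring
    rw [heq, show (0:ℝ) = 2 * 0 by ring]
    exact h0.const_mul 2
  refine le_antisymm ?_ zero_le
  refine ENNReal.le_of_forall_pos_le_add fun ε hε _ => ?_
  have hev : ∀ᶠ n : ℕ in atTop,
      ENNReal.ofReal (2 * (8/9 : ℝ) ^ n * (n:ℝ) ^ 2) < (ε : ℝ≥0∞) := by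
    refine htend.eventually_lt_const ?_
    exact_mod_cast hε
  obtain ⟨n0, hn0⟩ := eventually_atTop.1 hev
  obtain ⟨m, hm1, hm2, hm3⟩ := hfreq n0
  rw [zero_add]
  exact le_trans (key m hm2 hm3) (le_of_lt (hn0 m hm1))

/-- The set of `z` hitting the Cantor set from two translate-intersections. -/
def Aset (u v : ℝ) : Set ℝ :=
  {z | ∃ c ∈ cantorSet, ∃ w, w + u ∈ cantorSet ∧ w + v ∈ cantorSet ∧ z = c - w}

lemma Aset_preimage (u v : ℝ) : Aset u v = (fun z => z + -u) ⁻¹' Eset (v - u) := by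
  ext z
  simp only [Aset, Eset, mem_setOf_eq, mem_preimage]
  constructor
  · rintro ⟨c, hc, w, hwu, hwv, rfl⟩
    refine ⟨c, hc, w + u, hwu, ?_, by ring⟩
    rw [show w + u + (v - u) = w + v by ring]
    exact hwv
  · rintro ⟨c, hc, w', hw', hw's, hz⟩
    refine ⟨c, hc, w' - u, ?_, ?_, ?_⟩
    · rw [sub_add_cancel]
      exact hw'
    · rw [show w' - u + v = w' + (v - u) by ring]
      exact hw's
    · have : z = c - w' + u := by linarith [hz]
      rw [this]; ring
  

lemma volume_Aset {u v : ℝ} (hv : v - u ∉ Bad) : volume (Aset u v) = 0 := by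
  rw [Aset_preimage]
  rw [measure_preimage_add_right volume (-u) _]
  exact volume_Eset hv


end Stmt8Aux
end

/-- `cov(N)`: the least cardinality of a family of Lebesgue null sets covering `ℝ`. -/
noncomputable def covNull : Cardinal :=
  sInf {c : Cardinal | ∃ S : Set (Set ℝ), Cardinal.mk S = c ∧
    (∀ s ∈ S, volume s = 0) ∧ ⋃₀ S = Set.univ}

/-- `cof(N)`: the least cardinality of a family of null sets cofinal in the null ideal. -/
noncomputable def cofNull : Cardinal :=
  sInf {c : Cardinal | ∃ S : Set (Set ℝ), Cardinal.mk S = c ∧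
    (∀ s ∈ S, volume s = 0) ∧ ∀ t : Set ℝ, volume t = 0 → ∃ s ∈ S, t ⊆ s}

noncomputable section
namespace Stmt8Aux

open Cardinal

lemma covSet_nonempty : {c : Cardinal | ∃ S : Set (Set ℝ), Cardinal.mk S = c ∧
    (∀ s ∈ S, volume s = 0) ∧ ⋃₀ S = Set.univ}.Nonempty := by
  refine ⟨_, Set.range (fun r : ℝ => ({r} : Set ℝ)), rfl, ?_, ?_⟩
  · rintro s ⟨r, rfl⟩
    exact Real.volume_singleton
  · rw [Set.sUnion_range]
    exact Set.iUnion_of_singleton ℝ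

lemma aleph0_lt_covNull : ℵ₀ < covNull := by
  obtain ⟨S, hmk, hnull, hcov⟩ := csInf_mem covSet_nonempty
  rw [lt_iff_not_ge]
  intro hle
  rw [show sInf {c : Cardinal | ∃ S : Set (Set ℝ), Cardinal.mk S = c ∧
    (∀ s ∈ S, volume s = 0) ∧ ⋃₀ S = Set.univ} = covNull from rfl] at hmk
  have hcnt : Countable ↥S := by
    rw [← Cardinal.mk_le_aleph0_iff, hmk]
    exact hle
  have h0 : volume (⋃₀ S) = 0 := by
    rw [Set.sUnion_eq_iUnion]
    exact measure_iUnion_null fun s => hnull s s.2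
  rw [hcov, Real.volume_univ] at h0
  simp at h0

lemma not_cover {ι : Type} (f : ι → Set ℝ) (hc : Cardinal.mk ι < covNull)
    (hnull : ∀ k, volume (f k) = 0) : (⋃ k, f k) ≠ Set.univ := by
  intro hU
  have hmem : Cardinal.mk ↥(Set.range f) ∈ {c : Cardinal | ∃ S : Set (Set ℝ),
      Cardinal.mk S = c ∧ (∀ s ∈ S, volume s = 0) ∧ ⋃₀ S = Set.univ} := by
    refine ⟨Set.range f, rfl, ?_, ?_⟩
    · rintro s ⟨k, rfl⟩
      exact hnull k
    · rw [Set.sUnion_range]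
      exact hU
  have hle : covNull ≤ Cardinal.mk ↥(Set.range f) := csInf_le (OrderBot.bddBelow _) hmem
  exact absurd (hle.trans Cardinal.mk_range_le) (not_le.2 hc)


end Stmt8Aux
end

instance Stmt8Aux.instWO (o : Ordinal) : IsWellOrder o.ToType (· < ·) := isWellOrder_lt

open Stmt8Aux Cardinal in
theorem stmt8 (h : covNull = cofNull) :
    ∃ X : Set ℝ, 0 < volume X ∧
      ∀ t : ℝ, (cantorSet ∩ (fun x => x + t) '' X).Countable := by
  classical
  -- extract a cofinal family of null sets of cardinality `cofNull = covNull`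
  have hcofne : {c : Cardinal | ∃ S : Set (Set ℝ), Cardinal.mk S = c ∧
      (∀ s ∈ S, volume s = 0) ∧ ∀ t : Set ℝ, volume t = 0 → ∃ s ∈ S, t ⊆ s}.Nonempty :=
    ⟨_, {s : Set ℝ | volume s = 0}, rfl, fun s hs => hs, fun t ht => ⟨t, ht, subset_rfl⟩⟩
  obtain ⟨Sc, hSmk, hSnull, hScof⟩ := csInf_mem hcofne
  rw [show sInf {c : Cardinal | ∃ S : Set (Set ℝ), Cardinal.mk S = c ∧
      (∀ s ∈ S, volume s = 0) ∧ ∀ t : Set ℝ, volume t = 0 → ∃ s ∈ S, t ⊆ s} = cofNull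
    from rfl] at hSmk
  have hmkι : Cardinal.mk covNull.ord.ToType = covNull := Cardinal.mk_ord_toType covNull
  obtain ⟨E⟩ : Nonempty (covNull.ord.ToType ≃ ↥Sc) := by
    apply Cardinal.eq.1
    rw [hmkι, hSmk, h]
  set N : covNull.ord.ToType → Set ℝ := fun i => (E i : Set ℝ) with hNdef
  have hNnull : ∀ i, volume (N i) = 0 := fun i => hSnull _ (E i).2
  -- cardinality of initial segments
  have hseg : ∀ i : covNull.ord.ToType, Cardinal.mk {j // j < i} < covNull := by
    intro i
    have h1 := Ordinal.typein_lt_self (o := covNull.ord) i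
    rw [Cardinal.lt_ord] at h1
    have h2 := Ordinal.card_typein
      (r := ((· < ·) : covNull.ord.ToType → covNull.ord.ToType → Prop)) i
    rwa [h2] at h1
  have hseg' : ∀ i : covNull.ord.ToType, Cardinal.mk {j // j ≤ i} < covNull := by
    intro i
    have hsub : {j | j ≤ i} ⊆ insert i {j | j < i} := by
      intro j hj
      rcases eq_or_lt_of_le (show j ≤ i from hj) with h' | h'
      · exact Set.mem_insert_iff.2 (Or.inl h')
      · exact Set.mem_insert_iff.2 (Or.inr h')
    calc Cardinal.mk ↥{j | j ≤ i} ≤ Cardinal.mk ↥(insert i {j | j < i}) :=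
          Cardinal.mk_le_mk_of_subset hsub
      _ ≤ Cardinal.mk ↥{j | j < i} + 1 := Cardinal.mk_insert_le
      _ < covNull := Cardinal.add_lt_of_lt aleph0_lt_covNull.le (hseg i)
          (lt_trans Cardinal.one_lt_aleph0 aleph0_lt_covNull)
  -- the "nullify" trick and the avoidance family
  set nul : Set ℝ → Set ℝ := fun S => if volume S = 0 then S else ∅ with hnuldef
  have hnul_null : ∀ S, volume (nul S) = 0 := by
    intro S
    by_cases hS : volume S = 0
    · simp [hnuldef, hS]
    · simp [hnuldef, hS]
  have hnul_eq : ∀ S, volume S = 0 → nul S = S := fun S hS => if_pos hS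
  set fam : ∀ i : covNull.ord.ToType, (∀ j, j < i → ℝ) →
      ({j // j ≤ i} ⊕ ({j // j < i} ⊕ {j // j < i} × {j // j < i})) → Set ℝ :=
    fun i f k =>
      match k with
      | Sum.inl j => N j.1
      | Sum.inr (Sum.inl j) =>
          ((fun y => y - f j.1 j.2) ⁻¹' Bad) ∪ ((fun y => f j.1 j.2 - y) ⁻¹' Bad)
      | Sum.inr (Sum.inr p) => nul (Aset (f p.1.1 p.1.2) (f p.2.1 p.2.2))
    with hfamdef
  have hfam_null : ∀ i f k, volume (fam i f k) = 0 := by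
    rintro i f (j | j | p)
    · exact hNnull j.1
    · apply measure_union_null
      · have he : ((fun y => y - f j.1 j.2) ⁻¹' Bad)
            = ((fun y => y + -(f j.1 j.2)) ⁻¹' Bad) := by
          simp only [sub_eq_add_neg]
        rw [he, measure_preimage_add_right volume _ Bad]
        exact volume_Bad
      · have he : ((fun y => f j.1 j.2 - y) ⁻¹' Bad)
            = Neg.neg ⁻¹' ((fun y => f j.1 j.2 + y) ⁻¹' Bad) := by
          ext y
          simp [sub_eq_add_neg]
        rw [he, Measure.measure_preimage_neg, measure_preimage_add volume _ Bad]
        exact volume_Bad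
    · exact hnul_null _
  have hfam_card : ∀ i : covNull.ord.ToType,
      Cardinal.mk ({j // j ≤ i} ⊕ ({j // j < i} ⊕ {j // j < i} × {j // j < i})) < covNull := by
    intro i
    have ha := hseg i
    have hb := hseg' i
    have hℵ := aleph0_lt_covNull.le
    rw [Cardinal.mk_sum, Cardinal.mk_sum, Cardinal.mk_prod]
    simp only [Cardinal.lift_id]
    exact Cardinal.add_lt_of_lt hℵ hb
      (Cardinal.add_lt_of_lt hℵ ha (Cardinal.mul_lt_of_lt hℵ ha ha))
  have hex : ∀ (i : covNull.ord.ToType) (f : ∀ j, j < i → ℝ),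
      ∃ y : ℝ, y ∉ ⋃ k, fam i f k := by
    intro i f
    have hne := not_cover (fam i f) (hfam_card i) (hfam_null i f)
    exact (Set.ne_univ_iff_exists_notMem _).1 hne
  set x : covNull.ord.ToType → ℝ :=
    WellFounded.fix wellFounded_lt (fun i f => Classical.choose (hex i f)) with hxdef
  have hx : ∀ i, x i = Classical.choose (hex i (fun j _ => x j)) := fun i => by
    rw [hxdef]
    exact WellFounded.fix_eq _ _ i
  have hkey : ∀ i, x i ∉ ⋃ k, fam i (fun j _ => x j) k := by
    intro i
    rw [hx i]
    exact Classical.choose_spec (hex i fun j _ => x j)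
  have hxN : ∀ i j, j ≤ i → x i ∉ N j := by
    intro i j hj hmem
    exact hkey i (Set.mem_iUnion.2 ⟨Sum.inl ⟨j, hj⟩, hmem⟩)
  have hxBad₁ : ∀ i j, j < i → x i - x j ∉ Bad := by
    intro i j hj hmem
    exact hkey i (Set.mem_iUnion.2 ⟨Sum.inr (Sum.inl ⟨j, hj⟩), Or.inl hmem⟩)
  have hxBad₂ : ∀ i j, j < i → x j - x i ∉ Bad := by
    intro i j hj hmem
    exact hkey i (Set.mem_iUnion.2 ⟨Sum.inr (Sum.inl ⟨j, hj⟩), Or.inr hmem⟩)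
  have hvolA : ∀ j j', j ≠ j' → volume (Aset (x j) (x j')) = 0 := by
    intro j j' hne
    rcases hne.lt_or_gt with hlt | hgt
    · exact volume_Aset (hxBad₁ j' j hlt)
    · exact volume_Aset (hxBad₂ j j' hgt)
  have hxA : ∀ i j j', j < i → j' < i → j ≠ j' → x i ∉ Aset (x j) (x j') := by
    intro i j j' hj hj' hne hmem
    refine hkey i (Set.mem_iUnion.2 ⟨Sum.inr (Sum.inr (⟨j, hj⟩, ⟨j', hj'⟩)), ?_⟩)
    show x i ∈ nul (Aset (x j) (x j'))
    rwa [hnul_eq _ (hvolA j j' hne)]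
  refine ⟨Set.range x, ?_, ?_⟩
  · rw [pos_iff_ne_zero]
    intro h0
    obtain ⟨s, hs, hXs⟩ := hScof _ h0
    have hmem : x (E.symm ⟨s, hs⟩) ∈ s := hXs ⟨E.symm ⟨s, hs⟩, rfl⟩
    have hNeq : N (E.symm ⟨s, hs⟩) = s := by
      rw [hNdef]
      simp only [Equiv.apply_symm_apply]
    exact hxN _ _ le_rfl (by rw [hNeq]; exact hmem)
  · intro t
    have main : ∀ a b c, a ≠ b → x a + t ∈ cantorSet → x b + t ∈ cantorSet →
        x c + t ∈ cantorSet → a < c → b < c → False := by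
      intro a b c hab ha hb hc hac hbc
      refine hxA c a b hac hbc hab ?_
      refine ⟨x c + t, hc, t, ?_, ?_, by ring⟩
      · rwa [add_comm]
      · rwa [add_comm]
    have key3 : ∀ u v w, u ∈ cantorSet ∩ (fun x => x + t) '' (Set.range x) →
        v ∈ cantorSet ∩ (fun x => x + t) '' (Set.range x) →
        w ∈ cantorSet ∩ (fun x => x + t) '' (Set.range x) →
        u ≠ v → u ≠ w → v ≠ w → False := by
      intro u v w hu hv hw huv huw hvw
      obtain ⟨huC, au, ⟨iu, rfl⟩, rfl⟩ := hu
      obtain ⟨hvC, av, ⟨iv, rfl⟩, rfl⟩ := hv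
      obtain ⟨hwC, aw, ⟨iw, rfl⟩, rfl⟩ := hw
      have hiuv : iu ≠ iv := fun e => huv (by rw [e])
      have hiuw : iu ≠ iw := fun e => huw (by rw [e])
      have hivw : iv ≠ iw := fun e => hvw (by rw [e])
      rcases lt_trichotomy iu iv with h1 | h1 | h1
      · rcases lt_trichotomy iv iw with h2 | h2 | h2
        · exact main iu iv iw hiuv huC hvC hwC (h1.trans h2) h2
        · exact hivw h2
        · exact main iu iw iv hiuw huC hwC hvC h1 h2
      · exact hiuv h1
      · rcases lt_trichotomy iu iw with h2 | h2 | h2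
        · exact main iv iu iw (Ne.symm hiuv) hvC huC hwC (h1.trans h2) h2
        · exact hiuw h2
        · exact main iv iw iu hivw hvC hwC huC h1 h2
    by_cases hpair : ∃ u ∈ cantorSet ∩ (fun x => x + t) '' (Set.range x),
        ∃ v ∈ cantorSet ∩ (fun x => x + t) '' (Set.range x), u ≠ v
    · obtain ⟨u, hu, v, hv, huv⟩ := hpair
      have hsub : cantorSet ∩ (fun x => x + t) '' (Set.range x) ⊆ {u, v} := by
        intro z hz
        by_contra hz'
        simp only [Set.mem_insert_iff, Set.mem_singleton_iff, not_or] at hz'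
        exact key3 u v z hu hv hz huv (Ne.symm hz'.1) (Ne.symm hz'.2)
      exact Set.Countable.mono hsub (((Set.finite_singleton v).insert u).countable)
    · push_neg at hpair
      exact Set.Subsingleton.countable fun p hp q hq => hpair p hp q hq
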